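/- arXiv:2502.02480 — 5 statements merged into one kernel-verified Lean document; each statement's English description precedes it below -/
import Mathlib

section
/- Let H : ℝⁿ → ℝ be differentiable, let J, R : ℝⁿ → ℝⁿˣⁿ assign to each state a skew-symmetric matrix J(x) and a symmetric positive semidefinite matrix R(x), let G : ℝⁿ → ℝⁿˣᵐ, and let u : ℝ → ℝᵐ be such that the supply rate t ↦ ⟨∇H(x(t)), G(x(t)) u(t)⟩ is integrable on [t₀, t₁]. If x : ℝ → ℝⁿ satisfies ẋ(t) = (J(x(t)) − R(x(t))) ∇H(x(t)) + G(x(t)) u(t) for all t ∈ [t₀, t₁], then H(x(t₁)) ≤ H(x(t₀)) + ∫_{t₀}^{t₁} ⟨∇H(x(t)), G(x(t)) u(t)⟩ dt (integrated dissipativity with respect to the supply rate). -/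
open Matrix RealInnerProductSpace

/-- The gradient of a function on `ℝⁿ` (Euclidean space), via Mathlib's `gradient`. -/
noncomputable def grad {n : ℕ} (H : EuclideanSpace ℝ (Fin n) → ℝ) :
    EuclideanSpace ℝ (Fin n) → EuclideanSpace ℝ (Fin n) := gradient H

/-- Integrated dissipativity of the forced port-Hamiltonian system:
along a solution of `ẋ = (J(x) - R(x)) ∇H(x) + G(x) u(t)` on `[t₀, t₁]`, provided the
supply rate `t ↦ ⟨∇H(x(t)), G(x(t)) u(t)⟩` is integrable on `[t₀, t₁]`, one has
`H(x(t₁)) ≤ H(x(t₀)) + ∫_{t₀}^{t₁} ⟨∇H(x(t)), G(x(t)) u(t)⟩ dt`. -/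
theorem integrated_dissipativity {n m : ℕ}
    (H : EuclideanSpace ℝ (Fin n) → ℝ) (hH : Differentiable ℝ H)
    (J R : EuclideanSpace ℝ (Fin n) → Matrix (Fin n) (Fin n) ℝ)
    (G : EuclideanSpace ℝ (Fin n) → Matrix (Fin n) (Fin m) ℝ)
    (u : ℝ → EuclideanSpace ℝ (Fin m))
    (hJ : ∀ y, (J y)ᵀ = -(J y))
    (hRsym : ∀ y, (R y)ᵀ = R y)
    (hRpsd : ∀ y, ∀ v : Fin n → ℝ, 0 ≤ v ⬝ᵥ (R y).mulVec v)
    (t₀ t₁ : ℝ) (ht : t₀ ≤ t₁)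
    (x : ℝ → EuclideanSpace ℝ (Fin n))
    (hsupply : IntervalIntegrable
      (fun t => ⟪grad H (x t), WithLp.toLp 2 ((G (x t)).mulVec (u t))⟫) MeasureTheory.volume t₀ t₁)
    (hx : ∀ t ∈ Set.Icc t₀ t₁, HasDerivAt x
      (WithLp.toLp 2 ((J (x t) - R (x t)).mulVec (grad H (x t)) + (G (x t)).mulVec (u t))) t) :
    H (x t₁) ≤ H (x t₀) + ∫ t in t₀..t₁, ⟪grad H (x t), WithLp.toLp 2 ((G (x t)).mulVec (u t))⟫ := by
  -- derivative of H ∘ x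
  have hinner : ∀ (v w : EuclideanSpace ℝ (Fin n)), ⟪v, w⟫ = (v : Fin n → ℝ) ⬝ᵥ (w : Fin n → ℝ) := by
    intro v w
    simp [PiLp.inner_apply, dotProduct, mul_comm]
  have hderiv : ∀ t ∈ Set.Icc t₀ t₁, HasDerivAt (fun t => H (x t))
      (⟪grad H (x t), WithLp.toLp 2 ((J (x t) - R (x t)).mulVec (grad H (x t)) + (G (x t)).mulVec (u t))⟫) t := by
    intro t htI
    have h1 : HasGradientAt H (grad H (x t)) (x t) := (hH (x t)).hasGradientAt
    have h2 := h1.hasFDerivAt.comp_hasDerivAt t (hx t htI)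
    simp at h2 ⊢
    exact h2
  -- pointwise inequality
  have hle : ∀ t, ⟪grad H (x t), WithLp.toLp 2 ((J (x t) - R (x t)).mulVec (grad H (x t)) + (G (x t)).mulVec (u t))⟫
      ≤ ⟪grad H (x t), WithLp.toLp 2 ((G (x t)).mulVec (u t))⟫ := by
    intro t
    set g : Fin n → ℝ := (grad H (x t) : Fin n → ℝ) with hg
    have hskew : g ⬝ᵥ (J (x t)).mulVec g = 0 := by
      have h1 : g ⬝ᵥ (J (x t)).mulVec g = -(g ⬝ᵥ (J (x t)).mulVec g) := calc
        g ⬝ᵥ (J (x t)).mulVec g = ((J (x t))ᵀ.mulVec g) ⬝ᵥ g := by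
          rw [dotProduct_mulVec, ← mulVec_transpose]
        _ = ((-(J (x t))).mulVec g) ⬝ᵥ g := by rw [hJ (x t)]
        _ = -((J (x t)).mulVec g ⬝ᵥ g) := by rw [neg_mulVec, neg_dotProduct]
        _ = -(g ⬝ᵥ (J (x t)).mulVec g) := by rw [dotProduct_comm]
      linarith
    rw [WithLp.toLp_add, inner_add_right, hinner, hinner]
    have : g ⬝ᵥ (J (x t) - R (x t)).mulVec g ≤ 0 := by
      rw [sub_mulVec, dotProduct_sub, hskew]
      have := hRpsd (x t) g
      linarith
    have hgoal : (g ⬝ᵥ (J (x t) - R (x t)).mulVec g)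
        + g ⬝ᵥ ((G (x t)).mulVec (u t)) ≤ g ⬝ᵥ ((G (x t)).mulVec (u t)) := by linarith
    exact hgoal
  have key : H (x t₁) - H (x t₀) ≤ ∫ t in t₀..t₁, ⟪grad H (x t), WithLp.toLp 2 ((G (x t)).mulVec (u t))⟫ := by
    apply intervalIntegral.sub_le_integral_of_hasDeriv_right_of_le ht
    · exact fun t htI => ((hderiv t htI).continuousAt).continuousWithinAt
    · intro t htI
      exact ((hderiv t (Set.mem_Icc_of_Ioo htI)).hasDerivWithinAt)
    · exact (MeasureTheory.IntegrableOn.mono_set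
        ((intervalIntegrable_iff_integrableOn_Icc_of_le ht).mp hsupply) (by simp))
    · intro t htI
      exact hle t
  linarith
end

section
/- Let H : ℝⁿ → ℝ be convex, twice continuously differentiable, and satisfy H(0) = 0, ∇H(0) = 0, and positive definiteness of the Hessian of H at 0 (i.e., ⟨v, D(∇H)(0) v⟩ > 0 for all v ≠ 0). Then H is radially unbounded: H(x) → ∞ as ‖x‖ → ∞. -/
open RealInnerProductSpace

/-- A convex, twice continuously differentiable function `H` with
`H(0) = 0`, `∇H(0) = 0`, and positive definite Hessian at `0` is radially unbounded:
for every `M` there exists `K` such that `‖x‖ ≥ K` implies `H(x) ≥ M`. -/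
theorem convex_hamiltonian_radially_unbounded {n : ℕ}
    (H : EuclideanSpace ℝ (Fin n) → ℝ)
    (hconv : ConvexOn ℝ Set.univ H)
    (hsmooth : ContDiff ℝ 2 H)
    (h0 : H 0 = 0)
    (hgrad0 : grad H 0 = 0)
    (hhess : ∀ v : EuclideanSpace ℝ (Fin n), v ≠ 0 → 0 < ⟪v, fderiv ℝ (grad H) 0 v⟫) :
    ∀ M : ℝ, ∃ K : ℝ, ∀ x : EuclideanSpace ℝ (Fin n), K ≤ ‖x‖ → M ≤ H x := by
  have hdiff : Differentiable ℝ H := hsmooth.differentiable (by norm_num)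
  have key : ∀ x v : EuclideanSpace ℝ (Fin n), fderiv ℝ H x v = ⟪grad H x, v⟫ := by
    intro x v
    have h2 := hasGradientAt_iff_hasFDerivAt.mp (hdiff x).hasGradientAt
    rw [show grad H x = gradient H x from rfl, h2.fderiv]; simp
  have hgdiff : Differentiable ℝ (grad H) := by
    have h1 : Differentiable ℝ (fderiv ℝ H) :=
      (hsmooth.fderiv_right (m := 1) (by norm_num)).differentiable (by norm_num)
    exact fun x =>
      ((InnerProductSpace.toDual ℝ _).symm.toContinuousLinearEquiv.differentiableAt).comp x (h1 x)
  have gconv : ∀ v : EuclideanSpace ℝ (Fin n),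
      ConvexOn ℝ Set.univ (fun t : ℝ => H (t • v)) := by
    intro v
    have := hconv.comp_affineMap ((LinearMap.smulRight (LinearMap.id : ℝ →ₗ[ℝ] ℝ) v).toAffineMap)
    simpa [Function.comp_def] using this
  have hline : ∀ (v : EuclideanSpace ℝ (Fin n)) (t : ℝ), HasDerivAt (fun s : ℝ => s • v) v t := by
    intro v t
    simpa using (hasDerivAt_id t).smul_const v
  have gderiv : ∀ (v : EuclideanSpace ℝ (Fin n)) (t : ℝ),
      HasDerivAt (fun s : ℝ => H (s • v)) ⟪grad H (t • v), v⟫ t := by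
    intro v t
    have := ((hdiff (t • v)).hasFDerivAt).comp_hasDerivAt t (hline v t)
    simpa [key, Function.comp_def] using this
  have Hnonneg : ∀ x : EuclideanSpace ℝ (Fin n), 0 ≤ H x := by
    intro x
    have hd0 : HasDerivAt (fun s : ℝ => H (s • x)) 0 0 := by
      simpa [hgrad0] using gderiv x 0
    have h1 := (gconv x).le_slope_of_hasDerivAt (Set.mem_univ (0:ℝ)) (Set.mem_univ (1:ℝ))
      one_pos hd0
    simp [slope_def_field, h0] at h1
    linarith
  have Hpos : ∀ v : EuclideanSpace ℝ (Fin n), v ≠ 0 → 0 < H v := by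
    intro v hv
    have hc : 0 < ⟪v, fderiv ℝ (grad H) 0 v⟫ := hhess v hv
    set φ : ℝ → ℝ := fun t => ⟪v, grad H (t • v)⟫ with hφdef
    have hφ0 : φ 0 = 0 := by simp [hφdef, hgrad0]
    have hφ' : HasDerivAt φ ⟪v, fderiv ℝ (grad H) 0 v⟫ 0 := by
      have h1 : HasDerivAt (fun t : ℝ => grad H (t • v)) (fderiv ℝ (grad H) 0 v) 0 := by
        have := ((hgdiff ((0:ℝ) • v)).hasFDerivAt).comp_hasDerivAt 0 (hline v 0)
        simpa [Function.comp_def] using this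
      have := ((innerSL ℝ v).hasFDerivAt).comp_hasDerivAt 0 h1
      simpa [hφdef, Function.comp_def] using this
    have hslope := hasDerivAt_iff_tendsto_slope.mp hφ'
    have hslope' : Filter.Tendsto (slope φ 0) (nhdsWithin 0 (Set.Ioi 0))
        (nhds ⟪v, fderiv ℝ (grad H) 0 v⟫) :=
      hslope.mono_left (nhdsWithin_mono 0 (fun t ht => ne_of_gt ht))
    have hev : ∀ᶠ t in nhdsWithin (0:ℝ) (Set.Ioi 0), 0 < slope φ 0 t :=
      hslope' (Ioi_mem_nhds hc)
    have hev2 : ∀ᶠ t in nhdsWithin (0:ℝ) (Set.Ioi 0), t ∈ Set.Ioo (0:ℝ) 1 :=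
      Filter.eventually_of_mem (Ioo_mem_nhdsGT_of_mem (by norm_num : (0:ℝ) ∈ Set.Ico (0:ℝ) 1))
        (fun t ht => ht)
    obtain ⟨t, ht1, ht2⟩ := (hev.and hev2).exists
    obtain ⟨ht0, htlt1⟩ := ht2
    have hφt : 0 < φ t := by
      have : slope φ 0 t = φ t / t := by simp [slope_def_field, hφ0]
      rw [this] at ht1
      exact (div_pos_iff.mp ht1).elim (fun h => h.1) (fun h => absurd h.2 (not_lt.mpr ht0.le))
    -- gradient inequality from t to 1
    have h2 := (gconv v).le_slope_of_hasDerivAt (Set.mem_univ t) (Set.mem_univ (1:ℝ))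
      htlt1 (gderiv v t)
    have hsym : ⟪grad H (t • v), v⟫ = φ t := real_inner_comm _ _
    rw [hsym, slope_def_field] at h2
    have hHt : 0 ≤ H (t • v) := Hnonneg _
    have h3 : φ t * (1 - t) ≤ H v - H (t • v) := by
      rw [le_div_iff₀ (by linarith : (0:ℝ) < 1 - t)] at h2
      simpa [one_smul] using h2
    nlinarith
  -- main argument
  intro M
  by_cases hs : (Metric.sphere (0 : EuclideanSpace ℝ (Fin n)) 1).Nonempty
  · obtain ⟨u0, hu0, hmin⟩ := (isCompact_sphere (0 : EuclideanSpace ℝ (Fin n)) 1).exists_isMinOn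
      hs hsmooth.continuous.continuousOn
    set m := H u0 with hm
    have hu0ne : u0 ≠ 0 := by
      intro h
      rw [Metric.mem_sphere, h] at hu0
      simp at hu0
    have hmpos : 0 < m := Hpos u0 hu0ne
    refine ⟨max 1 (M / m), fun x hx => ?_⟩
    have hx1 : 1 ≤ ‖x‖ := le_trans (le_max_left _ _) hx
    have hxM : M / m ≤ ‖x‖ := le_trans (le_max_right _ _) hx
    have hxne : x ≠ 0 := by
      intro h; rw [h] at hx1; simp at hx1; linarith
    have hxpos : 0 < ‖x‖ := by linarith
    set u := ‖x‖⁻¹ • x with hu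
    have husphere : u ∈ Metric.sphere (0 : EuclideanSpace ℝ (Fin n)) 1 := by
      simp [hu, norm_smul, abs_of_pos (inv_pos.mpr hxpos), inv_mul_cancel₀ (ne_of_gt hxpos)]
    have hum : m ≤ H u := hmin husphere
    have hux : (‖x‖ : ℝ) • u = x := by
      rw [hu, smul_smul, mul_inv_cancel₀ (ne_of_gt hxpos), one_smul]
    -- slope monotonicity
    have hmono := (gconv u).slope_mono (Set.mem_univ (0:ℝ))
    have h1mem : (1:ℝ) ∈ Set.univ \ {(0:ℝ)} := ⟨Set.mem_univ _, by norm_num⟩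
    have hxmem : ‖x‖ ∈ Set.univ \ {(0:ℝ)} := ⟨Set.mem_univ _, by simpa using ne_of_gt hxpos⟩
    have h4 := hmono h1mem hxmem hx1
    have hslope1 : slope (fun t : ℝ => H (t • u)) 0 1 = H u := by
      simp [slope_def_field, h0]
    have hslopex : slope (fun t : ℝ => H (t • u)) 0 ‖x‖ = H x / ‖x‖ := by
      simp [slope_def_field, h0, hux]
    rw [hslope1, hslopex] at h4
    have h5 : ‖x‖ * H u ≤ H x := by
      rw [le_div_iff₀ hxpos] at h4
      linarith
    have h6 : M ≤ ‖x‖ * m := by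
      have := mul_le_mul_of_nonneg_right hxM hmpos.le
      rwa [div_mul_cancel₀ _ (ne_of_gt hmpos)] at this
    calc M ≤ ‖x‖ * m := h6
      _ ≤ ‖x‖ * H u := by nlinarith
      _ ≤ H x := h5
  · refine ⟨1, fun x hx => ?_⟩
    exfalso
    apply hs
    have hxpos : 0 < ‖x‖ := by linarith
    refine ⟨‖x‖⁻¹ • x, ?_⟩
    simp [norm_smul, abs_of_pos (inv_pos.mpr hxpos), inv_mul_cancel₀ (ne_of_gt hxpos)]
end

section
/- Let H : ℝⁿ → ℝ be convex, twice continuously differentiable, and satisfy H(0) = 0, ∇H(0) = 0, and positive definiteness of the Hessian of H at 0 (i.e., ⟨v, D(∇H)(0) v⟩ > 0 for all v ≠ 0). Then every sublevel set of H is bounded: for every c ∈ ℝ, the set {x ∈ ℝⁿ : H(x) ≤ c} is bounded. -/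
open RealInnerProductSpace

/-- A convex, twice continuously differentiable function `H` with
`H(0) = 0`, `∇H(0) = 0`, and positive definite Hessian at `0` has bounded sublevel
sets: for every `c` there exists `C` with `‖x‖ ≤ C` whenever `H(x) ≤ c`. -/
theorem convex_hamiltonian_bounded_sublevel_sets {n : ℕ}
    (H : EuclideanSpace ℝ (Fin n) → ℝ)
    (hconv : ConvexOn ℝ Set.univ H)
    (hsmooth : ContDiff ℝ 2 H)
    (h0 : H 0 = 0)
    (hgrad0 : grad H 0 = 0)
    (hhess : ∀ v : EuclideanSpace ℝ (Fin n), v ≠ 0 → 0 < ⟪v, fderiv ℝ (grad H) 0 v⟫) :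
    ∀ c : ℝ, ∃ C : ℝ, ∀ x : EuclideanSpace ℝ (Fin n), H x ≤ c → ‖x‖ ≤ C := by
  have hdiff : Differentiable ℝ H := hsmooth.differentiable two_ne_zero
  -- the Fréchet derivative of `H` at `0` vanishes
  have hfderiv0 : fderiv ℝ H 0 = 0 := by
    have := congrArg (InnerProductSpace.toDual ℝ (EuclideanSpace ℝ (Fin n))) hgrad0
    simpa [grad, gradient] using this
  -- `H` is nonnegative everywhere
  have hnonneg : ∀ y : EuclideanSpace ℝ (Fin n), 0 ≤ H y := by
    intro y
    have hsmul : HasDerivAt (fun t : ℝ => t • y) ((1:ℝ) • y) 0 :=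
      (hasDerivAt_id (0:ℝ)).smul_const y
    have hg : HasDerivAt (fun t : ℝ => H (t • y)) (0:ℝ) 0 := by
      have h1 : HasFDerivAt H (fderiv ℝ H ((0:ℝ) • y)) ((0:ℝ) • y) :=
        (hdiff ((0:ℝ) • y)).hasFDerivAt
      have := h1.comp_hasDerivAt 0 hsmul
      simpa [Function.comp_def, zero_smul, hfderiv0] using this
    have hgconv : ConvexOn ℝ Set.univ (fun t : ℝ => H (t • y)) := by
      have := hconv.comp_affineMap ((LinearMap.toSpanSingleton ℝ (EuclideanSpace ℝ (Fin n)) y).toAffineMap)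
      simpa [Function.comp_def, LinearMap.toSpanSingleton_apply] using this
    have := hgconv.le_slope_of_hasDerivAt (Set.mem_univ (0:ℝ)) (Set.mem_univ (1:ℝ))
      zero_lt_one hg
    simpa [slope, h0] using this
  -- `H` is strictly positive away from `0`
  have hpos : ∀ x : EuclideanSpace ℝ (Fin n), x ≠ 0 → 0 < H x := by
    intro x hx
    rcases lt_or_ge 0 (H x) with h | h
    · exact h
    have hHx : H x = 0 := le_antisymm h (hnonneg x)
    exfalso
    -- on the segment `[0, x]` the function vanishes, hence the gradient vanishes
    have hgradzero : ∀ t : ℝ, t ∈ Set.Icc (0:ℝ) 1 → grad H (t • x) = 0 := by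
      intro t ht
      have hle : H (t • x) ≤ 0 := by
        have := hconv.2 (Set.mem_univ x) (Set.mem_univ (0:EuclideanSpace ℝ (Fin n))) ht.1
          (by linarith [ht.2]) (by ring : t + (1 - t) = 1)
        simpa [h0, hHx, smul_zero] using this
      have hmin : IsLocalMin H (t • x) :=
        Filter.Eventually.of_forall fun z => hle.trans (hnonneg z)
      have : fderiv ℝ H (t • x) = 0 := hmin.fderiv_eq_zero
      simp [grad, gradient, this]
    -- `grad H` is differentiable at `0` since `H` is `C²`
    have hgraddiff : DifferentiableAt ℝ (grad H) 0 := by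
      have h1 : ContDiff ℝ 1 (fderiv ℝ H) :=
        hsmooth.fderiv_right (by norm_num)
      have h2 : ContDiff ℝ 1 (grad H) := by
        have := ((InnerProductSpace.toDual ℝ (EuclideanSpace ℝ (Fin n))).symm.contDiff (n := 1)).comp h1
        exact this
      exact h2.differentiable one_ne_zero 0
    set φ : ℝ → EuclideanSpace ℝ (Fin n) := fun t => grad H (t • x) with hφ
    have hsmul : HasDerivAt (fun t : ℝ => t • x) ((1:ℝ) • x) 0 :=
      (hasDerivAt_id (0:ℝ)).smul_const x
    have hDφ : HasDerivAt φ (fderiv ℝ (grad H) 0 x) 0 := by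
      have h1 : HasFDerivAt (grad H) (fderiv ℝ (grad H) ((0:ℝ) • x)) ((0:ℝ) • x) := by
        rw [zero_smul]; exact hgraddiff.hasFDerivAt
      have := h1.comp_hasDerivAt 0 hsmul
      simpa [Function.comp_def, zero_smul] using this
    have hU : UniqueDiffWithinAt ℝ (Set.Icc (0:ℝ) 1) 0 :=
      (uniqueDiffOn_Icc zero_lt_one) 0 (Set.mem_Icc.mpr ⟨le_rfl, zero_le_one⟩)
    have hzeroW : HasDerivWithinAt φ (0:EuclideanSpace ℝ (Fin n)) (Set.Icc (0:ℝ) 1) 0 := by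
      have hc : HasDerivWithinAt (fun _ : ℝ => (0:EuclideanSpace ℝ (Fin n))) (0:EuclideanSpace ℝ (Fin n)) (Set.Icc (0:ℝ) 1) 0 :=
        (hasDerivAt_const 0 (0:EuclideanSpace ℝ (Fin n))).hasDerivWithinAt
      refine hc.congr (fun t ht => ?_) ?_
      · exact hgradzero t ht
      · simpa [hφ, zero_smul] using hgrad0
    have hD : fderiv ℝ (grad H) 0 x = 0 := by
      have h1 := (hDφ.hasDerivWithinAt (s := Set.Icc (0:ℝ) 1)).derivWithin hU
      have h2 := hzeroW.derivWithin hU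
      rw [← h1, h2]
    have := hhess x hx
    rw [hD] at this
    simp at this
  intro c
  rcases subsingleton_or_nontrivial (EuclideanSpace ℝ (Fin n)) with hsub | hnt
  · exact ⟨0, fun x _ => by simp [Subsingleton.elim x 0]⟩
  -- minimum of `H` on the unit sphere
  obtain ⟨z, hz, hzmin⟩ := (isCompact_sphere (0:EuclideanSpace ℝ (Fin n)) 1).exists_isMinOn
    (NormedSpace.sphere_nonempty.mpr zero_le_one) (hsmooth.continuous.continuousOn)
  have hz1 : ‖z‖ = 1 := by simpa using hz
  have hm : 0 < H z := hpos z (by intro h; rw [h] at hz1; simp at hz1)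
  refine ⟨max 1 (c / H z), fun x hx => ?_⟩
  rcases le_or_gt ‖x‖ 1 with h1 | h1
  · exact h1.trans (le_max_left _ _)
  · have hxnorm : (0:ℝ) < ‖x‖ := lt_trans zero_lt_one h1
    set t : ℝ := ‖x‖⁻¹ with ht
    have ht0 : 0 < t := inv_pos.mpr hxnorm
    have ht1 : t ≤ 1 := by
      rw [ht, inv_le_one_iff₀]; right; exact le_of_lt h1
    have hu : ‖t • x‖ = 1 := by
      rw [norm_smul, Real.norm_eq_abs, abs_of_pos ht0, ht, inv_mul_cancel₀ (ne_of_gt hxnorm)]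
    have hmem : t • x ∈ Metric.sphere (0:EuclideanSpace ℝ (Fin n)) 1 := by simpa using hu
    have hHu : H z ≤ H (t • x) := hzmin hmem
    have hconvineq : H (t • x) ≤ t * H x := by
      have := hconv.2 (Set.mem_univ x) (Set.mem_univ (0:EuclideanSpace ℝ (Fin n))) (le_of_lt ht0)
        (by linarith) (by ring : t + (1 - t) = 1)
      simpa [h0, smul_zero] using this
    have key : ‖x‖ * H z ≤ H x := by
      have h2 : H z ≤ t * H x := hHu.trans hconvineq
      calc ‖x‖ * H z ≤ ‖x‖ * (t * H x) := by
            exact mul_le_mul_of_nonneg_left h2 (le_of_lt hxnorm)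
        _ = H x := by rw [← mul_assoc, ht, mul_inv_cancel₀ (ne_of_gt hxnorm), one_mul]
    have : ‖x‖ ≤ c / H z := by
      rw [le_div_iff₀ hm]
      exact key.trans hx
    exact this.trans (le_max_right _ _)
end

section
/- Let H : ℝⁿ → ℝ be convex, twice continuously differentiable, and satisfy H(0) = 0, ∇H(0) = 0, and positive definiteness of the Hessian of H at 0 (i.e., ⟨v, D(∇H)(0) v⟩ > 0 for all v ≠ 0). Let J, R : ℝⁿ → ℝⁿˣⁿ assign to each state a skew-symmetric matrix J(x) and a symmetric positive semidefinite matrix R(x). Then every solution of the unforced port-Hamiltonian system is bounded: if x : ℝ → ℝⁿ satisfies ẋ(t) = (J(x(t)) − R(x(t))) ∇H(x(t)) for all t ≥ t₀, then there exists C such that ‖x(t)‖ ≤ C for all t ≥ t₀. -/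
open Matrix RealInnerProductSpace

lemma aux_chain {n : ℕ} (H : EuclideanSpace ℝ (Fin n) → ℝ) (hd : Differentiable ℝ H)
    (c : ℝ → EuclideanSpace ℝ (Fin n)) (c' : EuclideanSpace ℝ (Fin n)) (t : ℝ)
    (hc : HasDerivAt c c' t) :
    HasDerivAt (fun s => H (c s)) ⟪grad H (c t), c'⟫ t := by
  have h1 : HasGradientAt H (grad H (c t)) (c t) := (hd (c t)).hasGradientAt
  have h2 := h1.hasFDerivAt.comp_hasDerivAt t hc
  simpa [InnerProductSpace.toDual_apply_apply, Function.comp_def] using h2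

lemma aux_inner_dot {n : ℕ} (a b : EuclideanSpace ℝ (Fin n)) :
    ⟪a, b⟫ = (a : Fin n → ℝ) ⬝ᵥ (b : Fin n → ℝ) := by
  simp [PiLp.inner_apply, dotProduct, mul_comm]

lemma aux_dissip {n : ℕ} (J R : Matrix (Fin n) (Fin n) ℝ)
    (hJ : Jᵀ = -J) (hRpsd : ∀ v : Fin n → ℝ, 0 ≤ v ⬝ᵥ R.mulVec v)
    (g : Fin n → ℝ) : g ⬝ᵥ (J - R).mulVec g ≤ 0 := by
  have hskew : g ⬝ᵥ J.mulVec g = 0 := by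
    have h1 : g ⬝ᵥ J.mulVec g = Jᵀ.mulVec g ⬝ᵥ g := by
      rw [dotProduct_mulVec, mulVec_transpose]
    rw [hJ] at h1
    have h2 : (-J).mulVec g ⬝ᵥ g = -(J.mulVec g ⬝ᵥ g) := by simp [neg_mulVec]
    have h4 : (J.mulVec g) ⬝ᵥ g = g ⬝ᵥ J.mulVec g := dotProduct_comm _ _
    have h3 := h1.trans h2
    linarith
  rw [sub_mulVec, dotProduct_sub, hskew]
  simpa using hRpsd g

lemma aux_contdiff_grad {n : ℕ} (H : EuclideanSpace ℝ (Fin n) → ℝ)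
    (hsmooth : ContDiff ℝ 2 H) : ContDiff ℝ 1 (grad H) := by
  have h1 : ContDiff ℝ 1 (fderiv ℝ H) := hsmooth.fderiv_right (by norm_num)
  have : grad H = fun y =>
      (InnerProductSpace.toDual ℝ (EuclideanSpace ℝ (Fin n))).symm (fderiv ℝ H y) := rfl
  rw [this]
  exact (InnerProductSpace.toDual ℝ (EuclideanSpace ℝ (Fin n))).symm.contDiff.comp h1

lemma aux_nonneg {n : ℕ} (H : EuclideanSpace ℝ (Fin n) → ℝ)
    (hconv : ConvexOn ℝ Set.univ H) (hsmooth : ContDiff ℝ 2 H)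
    (h0 : H 0 = 0) (hgrad0 : grad H 0 = 0) (v : EuclideanSpace ℝ (Fin n)) :
    0 ≤ H v := by
  have hd : Differentiable ℝ H := hsmooth.differentiable (by norm_num)
  set ψ : ℝ → ℝ := fun t => H (t • v) with hψ
  have hc : HasDerivAt (fun t : ℝ => t • v) v 0 := by
    simpa using (hasDerivAt_id (0:ℝ)).smul_const v
  have hderiv : HasDerivAt ψ 0 0 := by
    have := aux_chain H hd (fun t : ℝ => t • v) v 0 hc
    simpa [hψ, hgrad0] using this
  have hslope : Filter.Tendsto (slope ψ 0) (nhdsWithin 0 {(0:ℝ)}ᶜ) (nhds 0) :=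
    hasDerivAt_iff_tendsto_slope.mp hderiv
  have hslope' : Filter.Tendsto (slope ψ 0) (nhdsWithin 0 (Set.Ioi 0)) (nhds 0) :=
    hslope.mono_left (nhdsWithin_mono 0 (fun y hy => Set.mem_compl (by simpa using ne_of_gt hy)))
  refine le_of_tendsto hslope' ?_
  filter_upwards [self_mem_nhdsWithin, Ioo_mem_nhdsGT_of_mem (by norm_num : (0:ℝ) ∈ Set.Ico 0 1)]
    with t ht ht1
  have h01 : (0:ℝ) < t := ht
  have hle1 : t ≤ 1 := le_of_lt ht1.2
  have := hconv.2 (Set.mem_univ v) (Set.mem_univ 0) (le_of_lt h01) (by linarith : (0:ℝ) ≤ 1 - t)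
    (by ring)
  simp only [smul_zero, add_zero, h0, mul_zero] at this
  have hψt : ψ t ≤ t * H v := by simpa [hψ] using this
  have hs : slope ψ 0 t = ψ t / t := by
    simp only [slope, vsub_eq_sub, sub_zero, hψ, zero_smul, h0, div_eq_inv_mul, smul_eq_mul]
  rw [hs, div_le_iff₀ h01]
  linarith [hψt]

lemma aux_pos {n : ℕ} (H : EuclideanSpace ℝ (Fin n) → ℝ)
    (hconv : ConvexOn ℝ Set.univ H) (hsmooth : ContDiff ℝ 2 H)
    (h0 : H 0 = 0) (hgrad0 : grad H 0 = 0)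
    (hhess : ∀ v : EuclideanSpace ℝ (Fin n), v ≠ 0 → 0 < ⟪v, fderiv ℝ (grad H) 0 v⟫)
    (hnonneg : ∀ v, 0 ≤ H v)
    (v : EuclideanSpace ℝ (Fin n)) (hv : v ≠ 0) : 0 < H v := by
  have hd : Differentiable ℝ H := hsmooth.differentiable (by norm_num)
  rcases lt_or_eq_of_le (hnonneg v) with h | h
  · exact h
  exfalso
  have hzero : ∀ t : ℝ, t ∈ Set.Icc (0:ℝ) 1 → H (t • v) = 0 := by
    intro t ⟨ht0, ht1⟩
    have := hconv.2 (Set.mem_univ v) (Set.mem_univ 0) ht0 (by linarith : (0:ℝ) ≤ 1 - t) (by ring)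
    simp only [smul_zero, add_zero, h0, mul_zero, smul_eq_mul, ← h] at this
    have h2 := hnonneg (t • v)
    linarith [this]
  set φ : ℝ → ℝ := fun t => ⟪grad H (t • v), v⟫ with hφ
  have hc : ∀ t : ℝ, HasDerivAt (fun s : ℝ => s • v) v t := by
    intro t; simpa using (hasDerivAt_id t).smul_const v
  have hφ0 : ∀ t ∈ Set.Ico (0:ℝ) 1, φ t = 0 := by
    rintro t ⟨ht0, ht1⟩
    rcases eq_or_lt_of_le ht0 with rfl | ht0'
    · simp [hφ, hgrad0]
    · have hmem : Set.Ioo (0:ℝ) 1 ∈ nhds t := Ioo_mem_nhds ht0' ht1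
      have hloc : (fun s : ℝ => H (s • v)) =ᶠ[nhds t] (fun _ => 0) := by
        filter_upwards [hmem] with s hs
        exact hzero s ⟨le_of_lt hs.1, le_of_lt hs.2⟩
      have h1 : HasDerivAt (fun s : ℝ => H (s • v)) (φ t) t :=
        aux_chain H hd _ v t (hc t)
      have h2 : HasDerivAt (fun s : ℝ => H (s • v)) 0 t :=
        (hasDerivAt_const t (0:ℝ)).congr_of_eventuallyEq hloc
      exact h1.unique h2
  have hgd : DifferentiableAt ℝ (grad H) 0 :=
    ((aux_contdiff_grad H hsmooth).differentiable one_ne_zero) 0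
  have hcomp : HasDerivAt (fun t : ℝ => grad H (t • v)) (fderiv ℝ (grad H) 0 v) 0 := by
    have h0v : (0:ℝ) • v = 0 := zero_smul _ _
    have hgd' : HasFDerivAt (grad H) (fderiv ℝ (grad H) 0) ((0:ℝ) • v) := by
      rw [h0v]; exact hgd.hasFDerivAt
    exact hgd'.comp_hasDerivAt 0 (hc 0)
  have hD : HasDerivAt φ ⟪fderiv ℝ (grad H) 0 v, v⟫ 0 := by
    have := hcomp.inner (𝕜 := ℝ) (hasDerivAt_const 0 v)
    simpa [hφ] using this
  have hW : HasDerivWithinAt φ 0 (Set.Ici 0) 0 := by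
    have hloc : φ =ᶠ[nhdsWithin 0 (Set.Ici 0)] (fun _ => 0) := by
      have hmem : Set.Ico (0:ℝ) 1 ∈ nhdsWithin 0 (Set.Ici 0) := by
        rw [← Set.Ici_inter_Iio]
        exact Filter.inter_mem self_mem_nhdsWithin
          (nhdsWithin_le_nhds (Iio_mem_nhds (by norm_num)))
      filter_upwards [hmem] with s hs
      exact hφ0 s hs
    exact ((hasDerivAt_const (0:ℝ) (0:ℝ)).hasDerivWithinAt).congr_of_eventuallyEq hloc
      (by simp [hφ, hgrad0])
  have huniq : ⟪fderiv ℝ (grad H) 0 v, v⟫ = 0 := by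
    have h1 := hD.hasDerivWithinAt (s := Set.Ici 0)
    have := h1.derivWithin (uniqueDiffOn_Ici (0:ℝ) 0 Set.self_mem_Ici)
    rw [hW.derivWithin (uniqueDiffOn_Ici (0:ℝ) 0 Set.self_mem_Ici)] at this
    exact this.symm
  have := hhess v hv
  rw [real_inner_comm] at this
  linarith [huniq ▸ this]

/-- For a convex, twice continuously differentiable Hamiltonian `H`
with `H(0) = 0`, `∇H(0) = 0`, and positive definite Hessian at `0`, every solution of
the unforced port-Hamiltonian system `ẋ = (J(x) - R(x)) ∇H(x)` on `[t₀, ∞)` is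
bounded. -/
theorem phs_solutions_bounded {n : ℕ}
    (H : EuclideanSpace ℝ (Fin n) → ℝ)
    (hconv : ConvexOn ℝ Set.univ H)
    (hsmooth : ContDiff ℝ 2 H)
    (h0 : H 0 = 0)
    (hgrad0 : grad H 0 = 0)
    (hhess : ∀ v : EuclideanSpace ℝ (Fin n), v ≠ 0 → 0 < ⟪v, fderiv ℝ (grad H) 0 v⟫)
    (J R : EuclideanSpace ℝ (Fin n) → Matrix (Fin n) (Fin n) ℝ)
    (hJ : ∀ y, (J y)ᵀ = -(J y))
    (hRsym : ∀ y, (R y)ᵀ = R y)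
    (hRpsd : ∀ y, ∀ v : Fin n → ℝ, 0 ≤ v ⬝ᵥ (R y).mulVec v)
    (t₀ : ℝ) (x : ℝ → EuclideanSpace ℝ (Fin n))
    (hx : ∀ t : ℝ, t₀ ≤ t →
      HasDerivAt x (WithLp.toLp 2 ((J (x t) - R (x t)).mulVec (grad H (x t)))) t) :
    ∃ C : ℝ, ∀ t : ℝ, t₀ ≤ t → ‖x t‖ ≤ C := by
  rcases Nat.eq_zero_or_pos n with hn | hn
  · subst hn
    refine ⟨0, fun t _ => ?_⟩
    have : x t = 0 := Subsingleton.elim _ _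
    simp [this]
  have hd : Differentiable ℝ H := hsmooth.differentiable (by norm_num)
  have hnonneg := aux_nonneg H hconv hsmooth h0 hgrad0
  have hpos := aux_pos H hconv hsmooth h0 hgrad0 hhess hnonneg
  -- energy decreases
  have hE : ∀ t : ℝ, t₀ ≤ t → HasDerivAt (fun s => H (x s))
      ⟪grad H (x t), WithLp.toLp 2 ((J (x t) - R (x t)).mulVec (grad H (x t)))⟫ t :=
    fun t ht => aux_chain H hd x _ t (hx t ht)
  have hEnonpos : ∀ t : ℝ, t₀ ≤ t →
      ⟪grad H (x t), WithLp.toLp 2 ((J (x t) - R (x t)).mulVec (grad H (x t)))⟫ ≤ 0 := by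
    intro t ht
    rw [aux_inner_dot]
    exact aux_dissip (J (x t)) (R (x t)) (hJ (x t)) (hRpsd (x t)) (grad H (x t))
  have hanti : AntitoneOn (fun s => H (x s)) (Set.Ici t₀) := by
    apply antitoneOn_of_deriv_nonpos (convex_Ici t₀)
    · intro t ht
      exact ((hE t ht).continuousAt).continuousWithinAt
    · intro t ht
      rw [interior_Ici] at ht
      exact ((hE t (le_of_lt ht)).differentiableAt).differentiableWithinAt
    · intro t ht
      rw [interior_Ici] at ht
      rw [(hE t (le_of_lt ht)).deriv]
      exact hEnonpos t (le_of_lt ht)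
  set M : ℝ := H (x t₀) with hM
  have hbound : ∀ t : ℝ, t₀ ≤ t → H (x t) ≤ M :=
    fun t ht => hanti Set.self_mem_Ici ht ht
  -- minimum of H on the unit sphere
  have hsne : (Metric.sphere (0 : EuclideanSpace ℝ (Fin n)) 1).Nonempty := by
    refine ⟨EuclideanSpace.single ⟨0, hn⟩ (1:ℝ), ?_⟩
    simp [EuclideanSpace.norm_single]
  obtain ⟨u, hu, humin⟩ := (isCompact_sphere (0 : EuclideanSpace ℝ (Fin n)) 1).exists_isMinOn
    hsne (hsmooth.continuous.continuousOn)
  have hunorm : ‖u‖ = 1 := by simpa using hu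
  have hune : u ≠ 0 := by
    intro h; rw [h] at hunorm; simp at hunorm
  set c : ℝ := H u with hc
  have hcpos : 0 < c := hpos u hune
  -- coercivity: for ‖v‖ ≥ 1, c * ‖v‖ ≤ H v
  have hcoer : ∀ v : EuclideanSpace ℝ (Fin n), 1 ≤ ‖v‖ → c * ‖v‖ ≤ H v := by
    intro v hv1
    have hvpos : (0:ℝ) < ‖v‖ := by linarith
    set a : ℝ := ‖v‖⁻¹ with ha
    have ha0 : 0 < a := inv_pos.mpr hvpos
    have ha1 : a ≤ 1 := by
      rw [ha]; exact inv_le_one_of_one_le₀ hv1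
    have hav : ‖a • v‖ = 1 := by
      rw [norm_smul, Real.norm_eq_abs, abs_of_pos ha0, ha, inv_mul_cancel₀ (ne_of_gt hvpos)]
    have hmem : a • v ∈ Metric.sphere (0 : EuclideanSpace ℝ (Fin n)) 1 := by
      simpa using hav
    have h1 : c ≤ H (a • v) := humin hmem
    have h2 := hconv.2 (Set.mem_univ v) (Set.mem_univ 0) (le_of_lt ha0)
      (by linarith : (0:ℝ) ≤ 1 - a) (by ring)
    simp only [smul_zero, add_zero, h0, mul_zero, smul_eq_mul] at h2
    have h3 : c ≤ a * H v := le_trans h1 h2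
    calc c * ‖v‖ ≤ (a * H v) * ‖v‖ := by
          apply mul_le_mul_of_nonneg_right h3 (le_of_lt hvpos)
      _ = H v := by
          rw [ha]; field_simp
  refine ⟨max 1 (M / c), fun t ht => ?_⟩
  rcases le_or_gt ‖x t‖ 1 with h1 | h1
  · exact le_trans h1 (le_max_left _ _)
  · have h2 := hcoer (x t) (le_of_lt h1)
    have h3 : c * ‖x t‖ ≤ M := le_trans h2 (hbound t ht)
    have h4 : ‖x t‖ ≤ M / c := by
      rw [le_div_iff₀ hcpos]; linarith [h3]
    exact le_trans h4 (le_max_right _ _)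
end

section
/- Let H : ℝⁿ → ℝ be convex, twice continuously differentiable, and satisfy H(0) = 0, ∇H(0) = 0, and positive definiteness of the Hessian of H at 0 (i.e., ⟨v, D(∇H)(0) v⟩ > 0 for all v ≠ 0). Let J, R : ℝⁿ → ℝⁿˣⁿ assign to each state a skew-symmetric matrix J(x) and a symmetric positive semidefinite matrix R(x). Then the equilibrium x = 0 of the unforced port-Hamiltonian system ẋ = (J(x) − R(x)) ∇H(x) is Lyapunov stable: for every ε > 0 there exists δ > 0 such that every solution x : [t₀, ∞) → ℝⁿ of the system with ‖x(t₀)‖ < δ satisfies ‖x(t)‖ < ε for all t ≥ t₀. -/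
open Matrix RealInnerProductSpace

section aux

variable {n : ℕ} {H : EuclideanSpace ℝ (Fin n) → ℝ}

lemma fderiv_eq_inner_grad (hd : DifferentiableAt ℝ H z) (w : EuclideanSpace ℝ (Fin n)) :
    fderiv ℝ H z w = ⟪grad H z, w⟫ := by
  rw [grad, gradient, InnerProductSpace.toDual_symm_apply]

lemma smul_line_hasDerivAt (y : EuclideanSpace ℝ (Fin n)) (t : ℝ) :
    HasDerivAt (fun s : ℝ => s • y) y t := by
  simpa using (hasDerivAt_id t).smul_const y

lemma phi_hasDerivAt (hd : Differentiable ℝ H) (y : EuclideanSpace ℝ (Fin n)) (t : ℝ) :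
    HasDerivAt (fun s : ℝ => H (s • y)) ⟪grad H (t • y), y⟫ t := by
  have h := (hd (t • y)).hasFDerivAt.comp_hasDerivAt t (smul_line_hasDerivAt y t)
  rwa [fderiv_eq_inner_grad (hd _)] at h

lemma phi_convex (hconv : ConvexOn ℝ Set.univ H) (y : EuclideanSpace ℝ (Fin n)) :
    ConvexOn ℝ Set.univ (fun s : ℝ => H (s • y)) := by
  have := hconv.comp_affineMap (AffineMap.lineMap (0 : EuclideanSpace ℝ (Fin n)) y)
  simpa [Function.comp_def, AffineMap.lineMap_apply] using this

lemma H_nonneg (hconv : ConvexOn ℝ Set.univ H) (hd : Differentiable ℝ H)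
    (h0 : H 0 = 0) (hgrad0 : grad H 0 = 0) (y : EuclideanSpace ℝ (Fin n)) : 0 ≤ H y := by
  have hs := (phi_convex hconv y).le_slope_of_hasDerivAt (Set.mem_univ (0:ℝ))
    (Set.mem_univ (1:ℝ)) one_pos (phi_hasDerivAt hd y 0)
  rw [slope_def_field] at hs
  simpa [h0, hgrad0] using hs

lemma H_pos (hconv : ConvexOn ℝ Set.univ H) (hsmooth : ContDiff ℝ 2 H)
    (h0 : H 0 = 0) (hgrad0 : grad H 0 = 0)
    (hhess : ∀ v : EuclideanSpace ℝ (Fin n), v ≠ 0 → 0 < ⟪v, fderiv ℝ (grad H) 0 v⟫)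
    (y : EuclideanSpace ℝ (Fin n)) (hy : y ≠ 0) : 0 < H y := by
  have hd : Differentiable ℝ H := hsmooth.differentiable two_ne_zero
  rcases lt_or_eq_of_le (H_nonneg hconv hd h0 hgrad0 y) with h | h
  · exact h
  exfalso
  -- φ vanishes on [0,1]
  have hφ0 : ∀ t ∈ Set.Icc (0:ℝ) 1, H (t • y) = 0 := by
    intro t ht
    refine le_antisymm ?_ (H_nonneg hconv hd h0 hgrad0 _)
    have := (phi_convex hconv y).2 (Set.mem_univ (0:ℝ)) (Set.mem_univ (1:ℝ))
      (by linarith [ht.2] : (0:ℝ) ≤ 1 - t) ht.1 (by ring)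
    simpa [h0, ← h] using this
  -- ψ t = ⟪grad H (t•y), y⟫ vanishes on [0,1)
  have hψ0 : ∀ t ∈ Set.Ico (0:ℝ) 1, ⟪grad H (t • y), y⟫ = 0 := by
    intro t ht
    rcases eq_or_lt_of_le ht.1 with h0t | h0t
    · simp [← h0t, hgrad0]
    have h1 := (phi_convex hconv y).le_slope_of_hasDerivAt (Set.mem_univ t)
      (Set.mem_univ (1:ℝ)) ht.2 (phi_hasDerivAt hd y t)
    have h2 := (phi_convex hconv y).slope_le_of_hasDerivAt (Set.mem_univ (0:ℝ))
      (Set.mem_univ t) h0t (phi_hasDerivAt hd y t)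
    rw [slope_def_field] at h1 h2
    rw [hφ0 t ⟨ht.1, ht.2.le⟩, hφ0 1 (by norm_num)] at h1
    rw [hφ0 t ⟨ht.1, ht.2.le⟩, hφ0 0 (by norm_num)] at h2
    norm_num at h1 h2
    simpa using le_antisymm h1 h2
  -- grad H is C¹, so ψ is differentiable at 0 with derivative ⟪Hess y, y⟫
  have hg1 : ContDiff ℝ 1 (grad H) := by
    have h2 : ContDiff ℝ 1 (fderiv ℝ H) := hsmooth.fderiv_right (le_refl _)
    exact ((InnerProductSpace.toDual ℝ
      (EuclideanSpace ℝ (Fin n))).symm.contDiff.comp h2 : _)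
  have hdg : HasFDerivAt (grad H) (fderiv ℝ (grad H) 0) 0 :=
    (hg1.differentiable one_ne_zero 0).hasFDerivAt
  have h1 : HasDerivAt (fun t : ℝ => grad H (t • y)) (fderiv ℝ (grad H) 0 y) 0 := by
    have hdg' : HasFDerivAt (grad H) (fderiv ℝ (grad H) 0) ((0:ℝ) • y) := by
      simpa using hdg
    exact hdg'.comp_hasDerivAt 0 (smul_line_hasDerivAt y 0)
  have hψd : HasDerivAt (fun t : ℝ => ⟪grad H (t • y), y⟫)
      ⟪fderiv ℝ (grad H) 0 y, y⟫ 0 := by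
    have := h1.inner ℝ (hasDerivAt_const (0:ℝ) y)
    simpa [hgrad0] using this
  have hc : HasDerivWithinAt (fun t : ℝ => ⟪grad H (t • y), y⟫)
      ⟪fderiv ℝ (grad H) 0 y, y⟫ (Set.Ici 0) 0 := hψd.hasDerivWithinAt
  have hmem : Set.Ico (0:ℝ) 1 ∈ nhdsWithin (0:ℝ) (Set.Ici 0) :=
    Ico_mem_nhdsGE one_pos
  have hcongr : HasDerivWithinAt (fun _ : ℝ => (0:ℝ))
      ⟪fderiv ℝ (grad H) 0 y, y⟫ (Set.Ici 0) 0 := by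
    refine hc.congr_of_eventuallyEq ?_ ?_
    · filter_upwards [hmem] with t ht
      exact (hψ0 t ht).symm
    · simp [hgrad0]
  have hzero : ⟪fderiv ℝ (grad H) 0 y, y⟫ = 0 := by
    have h := hcongr.derivWithin (uniqueDiffOn_Ici (0:ℝ) 0 Set.self_mem_Ici)
    have h2 : derivWithin (fun _ : ℝ => (0:ℝ)) (Set.Ici 0) 0 = 0 :=
      congrFun (derivWithin_const (𝕜 := ℝ) (c := (0:ℝ)) (s := Set.Ici (0:ℝ))) 0
    rw [h2] at h
    exact h.symm
  have := hhess y hy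
  rw [real_inner_comm] at hzero
  linarith

end aux

/-- For a convex, twice continuously differentiable Hamiltonian `H`
with `H(0) = 0`, `∇H(0) = 0`, and positive definite Hessian at `0`, the equilibrium
`x = 0` of the unforced port-Hamiltonian system `ẋ = (J(x) - R(x)) ∇H(x)` is Lyapunov
stable: for every `ε > 0` there is a `δ > 0` such that every solution starting with
`‖x(t₀)‖ < δ` satisfies `‖x(t)‖ < ε` for all `t ≥ t₀`. -/
theorem phs_equilibrium_lyapunov_stable {n : ℕ}
    (H : EuclideanSpace ℝ (Fin n) → ℝ)
    (hconv : ConvexOn ℝ Set.univ H)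
    (hsmooth : ContDiff ℝ 2 H)
    (h0 : H 0 = 0)
    (hgrad0 : grad H 0 = 0)
    (hhess : ∀ v : EuclideanSpace ℝ (Fin n), v ≠ 0 → 0 < ⟪v, fderiv ℝ (grad H) 0 v⟫)
    (J R : EuclideanSpace ℝ (Fin n) → Matrix (Fin n) (Fin n) ℝ)
    (hJ : ∀ y, (J y)ᵀ = -(J y))
    (hRsym : ∀ y, (R y)ᵀ = R y)
    (hRpsd : ∀ y, ∀ v : Fin n → ℝ, 0 ≤ v ⬝ᵥ (R y).mulVec v)
    (t₀ : ℝ) :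
    ∀ ε : ℝ, 0 < ε → ∃ δ : ℝ, 0 < δ ∧
      ∀ x : ℝ → EuclideanSpace ℝ (Fin n),
        (∀ t : ℝ, t₀ ≤ t →
          HasDerivAt x (WithLp.toLp 2 ((J (x t) - R (x t)).mulVec (grad H (x t)))) t) →
        ‖x t₀‖ < δ → ∀ t : ℝ, t₀ ≤ t → ‖x t‖ < ε := by
  intro ε hε
  rcases Nat.eq_zero_or_pos n with hn | hn
  · refine ⟨1, one_pos, fun x _ _ t _ => ?_⟩
    subst hn
    have : x t = 0 := Subsingleton.elim _ _
    simpa [this] using hε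
  have hd : Differentiable ℝ H := hsmooth.differentiable two_ne_zero
  -- inner product equals dot product
  have hip : ∀ u v : EuclideanSpace ℝ (Fin n), ⟪u, v⟫ = (u : Fin n → ℝ) ⬝ᵥ (v : Fin n → ℝ) := by
    intro u v
    simp [PiLp.inner_apply, dotProduct, RCLike.inner_apply, mul_comm]
  -- sphere of radius ε is nonempty and compact; minimum m of H there is positive
  have hsne : (Metric.sphere (0 : EuclideanSpace ℝ (Fin n)) ε).Nonempty := by
    refine ⟨ε • EuclideanSpace.single ⟨0, hn⟩ (1:ℝ), ?_⟩
    simp [norm_smul, abs_of_pos hε]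
  obtain ⟨y₀, hy₀, hmin⟩ := (isCompact_sphere (0 : EuclideanSpace ℝ (Fin n)) ε).exists_isMinOn
    hsne (hsmooth.continuous.continuousOn)
  set m := H y₀ with hm
  have hy₀ne : y₀ ≠ 0 := by
    intro h
    rw [mem_sphere_zero_iff_norm] at hy₀
    rw [h] at hy₀; simp at hy₀; linarith
  have hmpos : 0 < m := H_pos hconv hsmooth h0 hgrad0 hhess y₀ hy₀ne
  -- choose δ
  have hpre : H ⁻¹' Set.Iio m ∈ nhds (0 : EuclideanSpace ℝ (Fin n)) :=
    hsmooth.continuous.continuousAt.preimage_mem_nhds (Iio_mem_nhds (by simpa [h0] using hmpos))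
  obtain ⟨r, hr, hball⟩ := Metric.mem_nhds_iff.mp hpre
  refine ⟨min r ε, lt_min hr hε, fun x hx hx0 τ hτ => ?_⟩
  -- energy along the trajectory
  have hE : ∀ t : ℝ, t₀ ≤ t → HasDerivAt (fun s => H (x s))
      ⟪grad H (x t), WithLp.toLp 2 ((J (x t) - R (x t)).mulVec (grad H (x t)))⟫ t := by
    intro t ht
    have h := (hd (x t)).hasFDerivAt.comp_hasDerivAt t (hx t ht)
    rwa [fderiv_eq_inner_grad (hd _)] at h
  have hEneg : ∀ t : ℝ, t₀ ≤ t →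
      ⟪grad H (x t), WithLp.toLp 2 ((J (x t) - R (x t)).mulVec (grad H (x t)))⟫ ≤ 0 := by
    intro t ht
    set g : Fin n → ℝ := (grad H (x t) : Fin n → ℝ) with hg
    rw [hip]
    have hsub : (J (x t) - R (x t)).mulVec g = (J (x t)).mulVec g - (R (x t)).mulVec g := by
      simp [Matrix.sub_mulVec]
    have hskew : g ⬝ᵥ (J (x t)).mulVec g = 0 := by
      have e1 : g ⬝ᵥ (J (x t)).mulVec g = -(g ⬝ᵥ (J (x t)).mulVec g) := by
        calc g ⬝ᵥ (J (x t)).mulVec g = (g ᵥ* (J (x t))) ⬝ᵥ g := by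
              rw [Matrix.dotProduct_mulVec]
          _ = ((J (x t))ᵀ.mulVec g) ⬝ᵥ g := by
              rw [← Matrix.transpose_transpose (J (x t)), Matrix.vecMul_transpose,
                Matrix.transpose_transpose]
          _ = ((-(J (x t))).mulVec g) ⬝ᵥ g := by rw [hJ]
          _ = -(((J (x t)).mulVec g) ⬝ᵥ g) := by
              rw [Matrix.neg_mulVec, neg_dotProduct]
          _ = -(g ⬝ᵥ (J (x t)).mulVec g) := by rw [dotProduct_comm]
      linarith
    rw [hsub, dotProduct_sub, hskew]
    have := hRpsd (x t) g
    linarith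
  -- H (x ·) is antitone on [t₀, ∞)
  have hanti : AntitoneOn (fun s => H (x s)) (Set.Ici t₀) := by
    refine antitoneOn_of_deriv_nonpos (convex_Ici t₀) ?_ ?_ ?_
    · intro s hs
      exact ((hE s hs).continuousAt).continuousWithinAt
    · intro s hs
      rw [interior_Ici] at hs
      exact ((hE s (le_of_lt hs)).differentiableAt).differentiableWithinAt
    · intro s hs
      rw [interior_Ici] at hs
      rw [(hE s (le_of_lt hs)).deriv]
      exact hEneg s (le_of_lt hs)
  -- initial energy below m
  have hE0 : H (x t₀) < m := by
    apply hball
    rw [Metric.mem_ball, dist_zero_right]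
    exact lt_of_lt_of_le hx0 (min_le_left _ _)
  -- conclude by contradiction via IVT
  by_contra hcon
  push_neg at hcon
  have hxt0 : ‖x t₀‖ < ε := lt_of_lt_of_le hx0 (min_le_right _ _)
  have hcont : ContinuousOn (fun s => ‖x s‖) (Set.Icc t₀ τ) := fun s hs =>
    ((hx s hs.1).continuousAt.norm).continuousWithinAt
  have hIVT := intermediate_value_Icc hτ hcont
  have hεmem : ε ∈ Set.Icc (‖x t₀‖) (‖x τ‖) := ⟨hxt0.le, hcon⟩
  obtain ⟨s, hs, hsε⟩ := hIVT hεmem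
  have hsS : x s ∈ Metric.sphere (0 : EuclideanSpace ℝ (Fin n)) ε := by
    rwa [mem_sphere_zero_iff_norm]
  have h1 : m ≤ H (x s) := hmin hsS
  have h2 : H (x s) ≤ H (x t₀) := hanti Set.self_mem_Ici hs.1 hs.1
  linarith
end
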